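/- There is a constant e such that for every finite nonempty set S of binary strings, every x ∈ S, and every natural number k ≤ ⌊log₂|S|⌋, there exists a finite set S' with x ∈ S', |S'| ≤ 2^{⌊log₂|S|⌋ − k}, and C(S') ≤ C(S) + k + e·⌊log₂(C(S) + k + 2)⌋ + e. (Partitioning an x-containing set into 2^k pieces increases its complexity by at most k plus logarithmic terms while dividing its size by 2^k.) -/

import Mathlib

/-- Bijective binary encoding of binary strings as natural numbers. -/
def strToNat : List Bool → ℕ
  | [] => 0
  | b :: t => (if b then 2 else 1) + 2 * strToNat t

/-- The partial result of running machine `M` on program `p` and auxiliary input `d`. -/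
def evalS (M : Nat.Partrec.Code) (p d : List Bool) : Part ℕ :=
  M.eval (Nat.pair (strToNat p) (strToNat d))

/-- `M(p, d) = x`. -/
def outputs (M : Nat.Partrec.Code) (p d x : List Bool) : Prop :=
  strToNat x ∈ evalS M p d

/-- `M` halts on program `p` (with empty auxiliary input). -/
def haltsOn (M : Nat.Partrec.Code) (p : List Bool) : Prop :=
  (evalS M p []).Dom

/-- The number of computation steps taken by `M` on program `p` (with empty auxiliary
input); meaningful only when `M` halts on `p`. -/
noncomputable def halttime (M : Nat.Partrec.Code) (p : List Bool) : ℕ :=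
  sInf {t | (Nat.Partrec.Code.evaln t M (Nat.pair (strToNat p) 0)).isSome}

/-- `M` is a universal machine: it simulates every machine `V` via a prefix `w_V`. -/
def Universal (M : Nat.Partrec.Code) : Prop :=
  ∀ V : Nat.Partrec.Code, ∃ w : List Bool, ∀ p y : List Bool,
    (evalS V p y).Dom → evalS M (w ++ p) y = evalS V p y

/-- Plain Kolmogorov complexity `C(x)` on machine `M`. -/
noncomputable def Cpx (M : Nat.Partrec.Code) (x : List Bool) : ℕ :=
  sInf {n | ∃ p : List Bool, p.length = n ∧ outputs M p [] x}

/-- Sophistication of `x` at (integer) significance level `c`. -/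
noncomputable def soph (M : Nat.Partrec.Code) (c : ℤ) (x : List Bool) : ℕ :=
  sInf {n | ∃ p : List Bool, p.length = n ∧ (∀ d : List Bool, (evalS M p d).Dom) ∧
    ∃ d : List Bool, outputs M p d x ∧ (p.length + d.length : ℤ) ≤ (Cpx M x : ℤ) + c}

/-- Logical depth of `x` at significance level `c`. -/
noncomputable def ld (M : Nat.Partrec.Code) (c : ℕ) (x : List Bool) : ℕ :=
  sInf {t | ∃ p : List Bool, p.length ≤ Cpx M x + c ∧ outputs M p [] x ∧ halttime M p = t}

/-- The inverse Busy Beaver function `bb(n)`. -/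
noncomputable def bbInv (M : Nat.Partrec.Code) (n : ℕ) : ℕ :=
  sInf {k | ∃ p : List Bool, p.length = k ∧ haltsOn M p ∧ n ≤ halttime M p}

/-- Busy Beaver logical depth of `x` at significance `c`. -/
noncomputable def ldbb (M : Nat.Partrec.Code) (c : ℕ) (x : List Bool) : ℕ :=
  bbInv M (ld M c x)

/-- The Busy Beaver function `BB(l)`. -/
noncomputable def BB (M : Nat.Partrec.Code) (l : ℕ) : ℕ :=
  sSup {t | ∃ p : List Bool, p.length ≤ l ∧ haltsOn M p ∧ halttime M p = t}

/-- Canonical encoding of a finite set of binary strings: the code of the sorted list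
of the codes of its elements. -/
def setCode (S : Finset (List Bool)) : ℕ :=
  Encodable.encode ((S.image strToNat).sort (· ≤ ·))

/-- Kolmogorov complexity `C(S)` of a finite set of binary strings on machine `M`. -/
noncomputable def CSet (M : Nat.Partrec.Code) (S : Finset (List Bool)) : ℕ :=
  sInf {n | ∃ p : List Bool, p.length = n ∧ setCode S ∈ evalS M p []}

/-- Conditional Kolmogorov complexity `C(x | m)` where the condition is a natural number. -/
noncomputable def CpxCondN (M : Nat.Partrec.Code) (x : List Bool) (m : ℕ) : ℕ :=
  sInf {n | ∃ p : List Bool, p.length = n ∧ strToNat x ∈ M.eval (Nat.pair (strToNat p) m)}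

namespace KPX
open List
open Nat.Partrec (Code)
open Nat.Partrec.Code

/-! ### The inverse encoding `natToStr` and basic facts -/

def natToStr : ℕ → List Bool
  | 0 => []
  | (n+1) => (decide ((n+1) % 2 = 0)) :: natToStr (n/2)
decreasing_by exact Nat.lt_succ_of_le (Nat.div_le_self n 2)

lemma strToNat_natToStr : ∀ n, strToNat (natToStr n) = n := by
  intro n; induction n using Nat.strong_induction_on with
  | _ n ih =>
    match n with
    | 0 => simp [natToStr, strToNat]
    | (m+1) =>
      rw [natToStr, strToNat, ih (m/2) (Nat.lt_succ_of_le (Nat.div_le_self m 2))]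
      by_cases h : (m+1) % 2 = 0 <;> simp [h] <;> omega

lemma natToStr_strToNat : ∀ s, natToStr (strToNat s) = s := by
  intro s; induction s with
  | nil => simp [strToNat, natToStr]
  | cons b t ih =>
    have h : strToNat (b :: t) = ((if b then 2 else 1) + 2 * strToNat t - 1) + 1 := by
      rw [strToNat]; cases b <;> simp <;> omega
    rw [h, natToStr]
    have h2 : ((if b then 2 else 1) + 2 * strToNat t - 1) / 2 = strToNat t := by
      cases b <;> simp <;> omega
    rw [h2, ih]
    congr 1
    cases b <;> simp <;> omega

lemma strToNat_injective : Function.Injective strToNat :=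
  Function.LeftInverse.injective natToStr_strToNat

lemma length_natToStr : ∀ n, (natToStr n).length = Nat.log 2 (n+1) := by
  intro n; induction n using Nat.strong_induction_on with
  | _ n ih =>
    match n with
    | 0 => simp [natToStr]
    | (m+1) =>
      rw [natToStr, List.length_cons, ih (m/2) (Nat.lt_succ_of_le (Nat.div_le_self m 2))]
      have h1 : (m + 2) / 2 = m / 2 + 1 := by omega
      have h2 : Nat.log 2 ((m+2)/2) = Nat.log 2 (m+2) - 1 := Nat.log_div_base 2 (m+2)
      rw [h1] at h2
      have h3 : 0 < Nat.log 2 (m+2) := Nat.log_pos (by norm_num) (by omega)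
      have h4 : Nat.log 2 (m+1+1) = Nat.log 2 (m+2) := by norm_num
      omega

lemma strToNat_eq (l : List Bool) :
    strToNat l = l.foldr (fun b acc => (if b then 2 else 1) + 2*acc) 0 := by
  induction l with
  | nil => rfl
  | cons b t ih => rw [strToNat, ih, List.foldr_cons]

/-! ### Fixed-width binary values -/

def binVal : List Bool → ℕ
  | [] => 0
  | b :: t => (if b then 1 else 0) + 2 * binVal t

def padBits : ℕ → ℕ → List Bool
  | 0, _ => []
  | (l+1), i => (decide (i % 2 = 1)) :: padBits l (i/2)

lemma padBits_length : ∀ l i, (padBits l i).length = l := by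
  intro l; induction l with
  | zero => intro i; rfl
  | succ l ih => intro i; rw [padBits, List.length_cons, ih]

lemma binVal_padBits : ∀ l i, i < 2^l → binVal (padBits l i) = i := by
  intro l; induction l with
  | zero => intro i hi; interval_cases i; rfl
  | succ l ih =>
    intro i hi
    rw [padBits, binVal, ih (i/2) (by omega)]
    by_cases h : i % 2 = 1 <;> simp [h] <;> omega

lemma binVal_eq (l : List Bool) :
    binVal l = l.foldr (fun b acc => (if b then 1 else 0) + 2*acc) 0 := by
  induction l with
  | nil => rfl
  | cons b t ih => rw [binVal, ih, List.foldr_cons]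

/-! ### Primrec facts -/

lemma drop_primrec {α : Type} [Primcodable α] :
    Primrec₂ (fun (l : List α) (n : ℕ) => l.drop n) := by
  have h := Primrec.nat_iterate (α := List α × ℕ) (f := Prod.snd) (g := Prod.fst)
    (h := fun _ (l : List α) => l.tail) Primrec.snd Primrec.fst
    (Primrec.list_tail.comp₂ Primrec₂.right)
  refine Primrec₂.mk (h.of_eq ?_)
  rintro ⟨l, n⟩
  simp only
  induction n generalizing l with
  | zero => simp
  | succ n ih => rw [Function.iterate_succ_apply', ih, List.tail_drop]

lemma range_filterMap_get? {α : Type} (l : List α) (n : ℕ) :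
    (List.range n).filterMap (l[·]?) = l.take n := by
  induction n with
  | zero => simp
  | succ n ih =>
    rw [List.range_succ, List.filterMap_append, ih, List.take_succ]
    cases h : l[n]? <;> simp [h]

lemma take_primrec {α : Type} [Primcodable α] :
    Primrec₂ (fun (l : List α) (n : ℕ) => l.take n) := by
  have h := Primrec.listFilterMap (α := List α × ℕ) (f := fun p => List.range p.2)
    (g := fun p j => p.1[j]?) (Primrec.list_range.comp Primrec.snd)
    (Primrec.list_getElem?.comp₂ (Primrec.fst.comp₂ Primrec₂.left) Primrec₂.right)
  refine Primrec₂.mk (h.of_eq ?_)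
  rintro ⟨l, n⟩
  exact range_filterMap_get? l n

lemma strToNat_primrec : Primrec strToNat := by
  have h := Primrec.list_foldr (α := List Bool) (f := id) (g := fun _ => 0)
    (h := fun _ (p : Bool × ℕ) => (cond p.1 2 1) + 2 * p.2)
    Primrec.id (Primrec.const 0) ?hh
  · refine h.of_eq fun l => ?_
    rw [strToNat_eq]
    induction l with
    | nil => rfl
    | cons b t ih => simp only [id, List.foldr_cons] at *; rw [ih]; cases b <;> rfl
  case hh =>
    refine Primrec₂.mk ?_
    refine Primrec.nat_add.comp ?_ ?_
    · exact Primrec.cond (Primrec.fst.comp Primrec.snd) (Primrec.const 2) (Primrec.const 1)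
    · exact Primrec.nat_mul.comp (Primrec.const 2) (Primrec.snd.comp Primrec.snd)

lemma binVal_primrec : Primrec binVal := by
  have h := Primrec.list_foldr (α := List Bool) (f := id) (g := fun _ => 0)
    (h := fun _ (p : Bool × ℕ) => (cond p.1 1 0) + 2 * p.2)
    Primrec.id (Primrec.const 0) ?hh
  · refine h.of_eq fun l => ?_
    rw [binVal_eq]
    induction l with
    | nil => rfl
    | cons b t ih => simp only [id, List.foldr_cons] at *; rw [ih]; cases b <;> rfl
  case hh =>
    refine Primrec₂.mk ?_
    refine Primrec.nat_add.comp ?_ ?_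
    · exact Primrec.cond (Primrec.fst.comp Primrec.snd) (Primrec.const 1) (Primrec.const 0)
    · exact Primrec.nat_mul.comp (Primrec.const 2) (Primrec.snd.comp Primrec.snd)

lemma natToStr_primrec : Primrec natToStr := by
  have H := Primrec.nat_strong_rec (α := Unit) (fun _ n => natToStr n)
    (g := fun _ (prev : List (List Bool)) =>
      if prev.length = 0 then some []
      else (prev[(prev.length - 1)/2]?).map (fun t => ((prev.length % 2 == 0) : Bool) :: t))
    ?hg ?H
  · exact (H.comp (Primrec.const ()) Primrec.id)
  case hg =>
    refine Primrec₂.mk ?_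
    refine Primrec.ite (Primrec.eq.comp (Primrec.list_length.comp Primrec.snd) (Primrec.const 0))
      (Primrec.const (some [])) ?_
    refine Primrec.option_map ?_ ?_
    · exact Primrec.list_getElem?.comp (Primrec.snd)
        (Primrec.nat_div.comp (Primrec.nat_sub.comp (Primrec.list_length.comp Primrec.snd)
          (Primrec.const 1)) (Primrec.const 2))
    · refine Primrec₂.mk ?_
      refine Primrec.list_cons.comp ?_ Primrec.snd
      exact Primrec.beq.comp
        (Primrec.nat_mod.comp (Primrec.list_length.comp (Primrec.snd.comp Primrec.fst))
          (Primrec.const 2))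
        (Primrec.const 0)
  case H =>
    intro _ n
    cases n with
    | zero => simp [natToStr]
    | succ m =>
      have hlen : ((List.range (m+1)).map natToStr).length = m + 1 := by simp
      rw [hlen]
      simp only [Nat.add_sub_cancel, if_neg (Nat.succ_ne_zero m)]
      have hj : m / 2 < m + 1 := Nat.lt_succ_of_le (Nat.div_le_self m 2)
      have : ((List.range (m+1)).map natToStr)[m/2]? = some (natToStr (m/2)) := by
        simp [hj]
      rw [this, natToStr]
      congr 1

lemma pow_primrec : Primrec₂ ((· ^ ·) : ℕ → ℕ → ℕ) :=
  Primrec₂.unpaired'.mp Nat.Primrec.pow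

/-! ### The decoder functions -/

/-- Parses an input number into `(k, i, m)`. -/
def parse (n : ℕ) : ℕ × ℕ × ℕ :=
  let s := natToStr n.unpair.1
  let Lk := s.findIdx (fun b => !b)
  let k := strToNat ((s.drop (Lk+1)).take Lk)
  let rest := (s.drop (Lk+1)).drop Lk
  (k, binVal (rest.take (k+1)), strToNat (rest.drop (k+1)))

def postFn (n c : ℕ) : Option ℕ :=
  (Encodable.decode (α := List ℕ) c).map (fun L =>
    let k := (parse n).1
    let i := (parse n).2.1
    let B := 2 ^ ((natToStr (L.length - 1)).length - k)
    Encodable.encode ((L.drop (i*B)).take B))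

def preFn (n : ℕ) : ℕ := (parse n).2.2

lemma parse_primrec : Primrec parse := by
  have hs : Primrec (fun n : ℕ => natToStr n.unpair.1) :=
    natToStr_primrec.comp (Primrec.fst.comp Primrec.unpair)
  have hLk : Primrec (fun n : ℕ => (natToStr n.unpair.1).findIdx (fun b => !b)) :=
    Primrec.list_findIdx hs ((Primrec.dom_bool (fun b => !b)).comp₂ Primrec₂.right)
  have hr1 : Primrec (fun n : ℕ => (natToStr n.unpair.1).drop
      ((natToStr n.unpair.1).findIdx (fun b => !b) + 1)) :=
    drop_primrec.comp hs (Primrec.succ.comp hLk)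
  have hk : Primrec (fun n : ℕ =>
      strToNat (((natToStr n.unpair.1).drop ((natToStr n.unpair.1).findIdx (fun b => !b) + 1)).take
        ((natToStr n.unpair.1).findIdx (fun b => !b)))) :=
    strToNat_primrec.comp (take_primrec.comp hr1 hLk)
  have hrest : Primrec (fun n : ℕ =>
      (((natToStr n.unpair.1).drop ((natToStr n.unpair.1).findIdx (fun b => !b) + 1)).drop
        ((natToStr n.unpair.1).findIdx (fun b => !b)))) :=
    drop_primrec.comp hr1 hLk
  exact hk.pair
    ((binVal_primrec.comp (take_primrec.comp hrest (Primrec.succ.comp hk))).pair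
      (strToNat_primrec.comp (drop_primrec.comp hrest (Primrec.succ.comp hk))))

lemma postFn_primrec : Primrec₂ postFn := by
  refine Primrec₂.mk ?_
  refine Primrec.option_map (Primrec.decode.comp Primrec.snd) ?_
  refine Primrec₂.mk ?_
  have hk : Primrec (fun q : (ℕ × ℕ) × List ℕ => (parse q.1.1).1) :=
    Primrec.fst.comp (parse_primrec.comp (Primrec.fst.comp Primrec.fst))
  have hi : Primrec (fun q : (ℕ × ℕ) × List ℕ => (parse q.1.1).2.1) :=
    Primrec.fst.comp (Primrec.snd.comp (parse_primrec.comp (Primrec.fst.comp Primrec.fst)))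
  have hB : Primrec (fun q : (ℕ × ℕ) × List ℕ =>
      2 ^ ((natToStr (q.2.length - 1)).length - (parse q.1.1).1)) :=
    pow_primrec.comp (Primrec.const 2)
      (Primrec.nat_sub.comp
        (Primrec.list_length.comp (natToStr_primrec.comp
          (Primrec.nat_sub.comp (Primrec.list_length.comp Primrec.snd) (Primrec.const 1))))
        hk)
  exact Primrec.encode.comp
    (take_primrec.comp
      (drop_primrec.comp Primrec.snd (Primrec.nat_mul.comp hi hB)) hB)

lemma preFn_primrec : Primrec preFn :=
  Primrec.snd.comp (Primrec.snd.comp parse_primrec)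

/-! ### The machine -/

def fU (U : Code) : ℕ →. ℕ :=
  fun n => (U.eval (Nat.pair (preFn n) 0)).bind fun c => (postFn n c : Part ℕ)

lemma fU_partrec (U : Code) : Nat.Partrec (fU U) := by
  rw [← Partrec.nat_iff]
  refine Partrec.bind ?_ ?_
  · exact Nat.Partrec.Code.eval_part.comp (Computable.const U)
      ((Primrec₂.natPair.comp preFn_primrec (Primrec.const 0)).to_comp)
  · exact Computable.ofOption (postFn_primrec.to_comp)

lemma findIdx_replicate (n : ℕ) (r : List Bool) :
    (List.replicate n true ++ false :: r).findIdx (fun b => !b) = n := by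
  induction n with
  | zero => simp [List.findIdx_cons]
  | succ n ih => rw [List.replicate_succ, List.cons_append, List.findIdx_cons]; simp [ih]

/-- The program for the sub-set, given header data `k`, `i` and program `p`. -/
def prog (k i : ℕ) (p : List Bool) : List Bool :=
  List.replicate (natToStr k).length true ++ false :: (natToStr k ++ (padBits (k+1) i ++ p))

lemma parse_prog (k i : ℕ) (p : List Bool) (hi : i < 2^(k+1)) :
    parse (Nat.pair (strToNat (prog k i p)) 0) = (k, i, strToNat p) := by
  have hs : natToStr ((Nat.pair (strToNat (prog k i p)) 0).unpair.1) = prog k i p := by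
    rw [Nat.unpair_pair, natToStr_strToNat]
  rw [parse]
  simp only [hs]
  rw [prog, findIdx_replicate]
  have h1 : (List.replicate (natToStr k).length true ++
      false :: (natToStr k ++ (padBits (k+1) i ++ p))).drop ((natToStr k).length + 1)
      = natToStr k ++ (padBits (k+1) i ++ p) := by
    rw [List.append_cons, List.drop_left']
    simp
  rw [h1, List.take_left' rfl, List.drop_left' rfl, strToNat_natToStr,
    List.take_left' (padBits_length _ _), List.drop_left' (padBits_length _ _),
    binVal_padBits _ _ hi]

lemma prog_length (k i : ℕ) (p : List Bool) :
    (prog k i p).length = 2 * Nat.log 2 (k+1) + k + 2 + p.length := by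
  rw [prog]
  simp [padBits_length, length_natToStr]
  omega

end KPX

theorem set_partition_tradeoff :
    ∀ U : Nat.Partrec.Code, Universal U →
    ∃ e : ℕ, ∀ S : Finset (List Bool), S.Nonempty → ∀ x ∈ S,
      ∀ k : ℕ, k ≤ Nat.log 2 S.card →
      ∃ S' : Finset (List Bool), x ∈ S' ∧ S'.card ≤ 2 ^ (Nat.log 2 S.card - k) ∧
        CSet U S' ≤ CSet U S + k + e * Nat.log 2 (CSet U S + k + 2) + e := by
  intro U hU
  obtain ⟨V, hV⟩ := Nat.Partrec.Code.exists_code.1 (KPX.fU_partrec U)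
  obtain ⟨w, hw⟩ := hU V
  refine ⟨w.length + 2, ?_⟩
  intro S hS x hx k hk
  -- C(S) is attained
  have hneS : {n | ∃ p : List Bool, p.length = n ∧ setCode S ∈ evalS U p []}.Nonempty := by
    have hpc : Nat.Partrec (fun _ : ℕ => (Part.some (setCode S))) := by
      exact Partrec.nat_iff.1 (Partrec.const' _)
    obtain ⟨Vc, hVc⟩ := Nat.Partrec.Code.exists_code.1 hpc
    obtain ⟨w0, hw0⟩ := hU Vc
    have hdom : (evalS Vc [] []).Dom := by
      simp only [evalS, hVc]; trivial
    refine ⟨(w0 ++ []).length, w0 ++ [], rfl, ?_⟩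
    rw [hw0 [] [] hdom]
    simp only [evalS, hVc]
    exact Part.mem_some _
  obtain ⟨p, hplen, hpout⟩ := Nat.sInf_mem hneS
  rw [show sInf {n | ∃ p : List Bool, p.length = n ∧ setCode S ∈ evalS U p []} = CSet U S from rfl]
    at hplen
  set C := CSet U S with hC
  -- setup
  have hcard : 0 < S.card := hS.card_pos
  set L : List ℕ := (S.image strToNat).sort (· ≤ ·) with hL
  have hLlen : L.length = S.card := by
    rw [hL, Finset.length_sort, Finset.card_image_of_injective _ KPX.strToNat_injective]
  set lg := Nat.log 2 S.card with hlg
  set B := 2 ^ (lg - k) with hBdef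
  have hB : 0 < B := by positivity
  have hxL : strToNat x ∈ L := by
    rw [hL, Finset.mem_sort]; exact Finset.mem_image_of_mem _ hx
  set pos := L.idxOf (strToNat x) with hposdef
  have hpos : pos < L.length := List.idxOf_lt_length_iff.2 hxL
  set i := pos / B with hidef
  have hilt : i < 2^(k+1) := by
    have h1 : S.card < 2^(lg+1) := Nat.lt_pow_succ_log_self (by norm_num) _
    have h2 : pos < 2^(k+1) * B := by
      rw [hBdef, ← pow_add]
      have h3 : k + 1 + (lg - k) = lg + 1 := by omega
      rw [h3]; omega
    exact (Nat.div_lt_iff_lt_mul hB).2 h2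
  set block := (L.drop (i*B)).take B with hblock
  set S' := S.filter (fun s => strToNat s ∈ block) with hS'
  have hsubl : block.Sublist L := (List.take_sublist _ _).trans (List.drop_sublist _ _)
  have hnd : block.Nodup := (Finset.sort_nodup _ _).sublist hsubl
  have hsorted : block.Pairwise (· ≤ ·) := List.Pairwise.sublist hsubl (Finset.pairwise_sort _ _)
  have hkey : (S'.image strToNat).sort (· ≤ ·) = block := by
    refine List.Perm.eq_of_pairwise' (Finset.pairwise_sort _ _) hsorted ?_
    refine List.perm_of_nodup_nodup_toFinset_eq (Finset.sort_nodup _ _) hnd ?_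
    ext y
    simp only [List.mem_toFinset, Finset.mem_sort, Finset.mem_image, hS', Finset.mem_filter]
    constructor
    · rintro ⟨s, ⟨hsS, hsb⟩, rfl⟩; exact hsb
    · intro hy
      have hyL : y ∈ L := hsubl.subset hy
      rw [hL, Finset.mem_sort] at hyL
      obtain ⟨s, hsS, rfl⟩ := Finset.mem_image.1 hyL
      exact ⟨s, ⟨hsS, hy⟩, rfl⟩
  -- x ∈ S'
  have hixB : i * B ≤ pos := by rw [hidef]; exact Nat.div_mul_le_self pos B
  have hjB : pos - i * B < B := by
    have hdm : i * B + pos % B = pos := by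
      rw [hidef, Nat.mul_comm]; exact Nat.div_add_mod pos B
    have hmod : pos % B < B := Nat.mod_lt pos hB
    omega
  have hxblock : strToNat x ∈ block := by
    have h4 : i*B + (pos - i*B) = pos := by omega
    have hget : block[pos - i*B]? = some (strToNat x) := by
      rw [hblock, List.getElem?_take, if_pos hjB, List.getElem?_drop, h4,
        List.getElem?_eq_getElem hpos]
      congr 1
      exact List.getElem_idxOf hpos
    exact List.mem_of_getElem? hget
  have hxS' : x ∈ S' := by rw [hS']; exact Finset.mem_filter.2 ⟨hx, hxblock⟩
  have hcardS' : S'.card ≤ B := by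
    have h1 : S'.card = ((S'.image strToNat).sort (· ≤ ·)).length := by
      rw [Finset.length_sort, Finset.card_image_of_injective _ KPX.strToNat_injective]
    rw [h1, hkey, hblock, List.length_take]; exact min_le_left _ _
  refine ⟨S', hxS', hcardS', ?_⟩
  -- complexity bound
  set n := Nat.pair (strToNat (KPX.prog k i p)) 0 with hn
  have hparse := KPX.parse_prog k i p hilt
  have hfeval : KPX.fU U n = Part.some (setCode S') := by
    rw [KPX.fU]
    have hpre : KPX.preFn n = strToNat p := by rw [KPX.preFn, hn, hparse]
    have hUeval : U.eval (Nat.pair (strToNat p) 0) = Part.some (setCode S) := by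
      apply Part.eq_some_iff.2
      exact hpout
    rw [hpre, hUeval, Part.bind_some]
    have hdec : (Encodable.decode (setCode S) : Option (List ℕ)) = some L := by
      rw [show setCode S = Encodable.encode L from rfl]
      exact Encodable.encodek L
    rw [KPX.postFn, hdec]
    simp only [hn, hparse, Option.map_some]
    have hBeq : 2 ^ ((KPX.natToStr (L.length - 1)).length - k) = B := by
      rw [KPX.length_natToStr, hLlen]
      have : S.card - 1 + 1 = S.card := by omega
      rw [this, ← hlg, hBdef]
    rw [hBeq]
    have hsc : setCode S' = Encodable.encode block := by
      rw [setCode, hkey]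
    rw [hsc]
    rfl
  have hVeq : evalS V (KPX.prog k i p) [] = KPX.fU U n := by
    simp only [evalS, hV]
    rw [hn]
    rfl
  have hdomV : (evalS V (KPX.prog k i p) []).Dom := by
    rw [hVeq, hfeval]; trivial
  have hout : setCode S' ∈ evalS U (w ++ KPX.prog k i p) [] := by
    rw [hw _ _ hdomV, hVeq, hfeval]
    exact Part.mem_some _
  have hle : CSet U S' ≤ (w ++ KPX.prog k i p).length :=
    Nat.sInf_le ⟨w ++ KPX.prog k i p, rfl, hout⟩
  have hlen : (w ++ KPX.prog k i p).length = w.length + (2 * Nat.log 2 (k+1) + k + 2 + C) := by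
    rw [List.length_append, KPX.prog_length, hplen]
  have h2log : 2 * Nat.log 2 (k+1) ≤ (w.length + 2) * Nat.log 2 (C + k + 2) := by
    have hlog : Nat.log 2 (k+1) ≤ Nat.log 2 (C + k + 2) := Nat.log_mono_right (by omega)
    calc 2 * Nat.log 2 (k+1) ≤ 2 * Nat.log 2 (C + k + 2) := by omega
    _ ≤ (w.length + 2) * Nat.log 2 (C + k + 2) := Nat.mul_le_mul_right _ (by omega)
  omega
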